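/- Let G be a finite abelian group with maol(G) = 2. Then G is isomorphic to Z/mZ for some m ∈ {3, 4, 6}. -/

import Mathlib

/-- `maol G` is the maximum length of an orbit of the natural action of `Aut(G)` on `G`. -/
noncomputable def maol (G : Type*) [Group G] : ℕ :=
  ⨆ g : G, Nat.card (MulAction.orbit (MulAut G) g)

open MulAction

section helpers
open MulAction

section
variable {K : Type*} [Finite K]

lemma three_le_card {s : Set K} {x y z : K}
    (hx : x ∈ s) (hy : y ∈ s) (hz : z ∈ s) (hxy : x ≠ y) (hxz : x ≠ z) (hyz : y ≠ z) :
    3 ≤ Nat.card s := by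
  have hsub : ({x, y, z} : Set K) ⊆ s := by
    intro w hw
    rcases hw with rfl | rfl | rfl <;> assumption
  have h3 : ({x, y, z} : Set K).ncard = 3 := by
    rw [Set.ncard_insert_of_notMem (by simp [hxy, hxz]), Set.ncard_pair hyz]
  calc (3:ℕ) = ({x, y, z} : Set K).ncard := h3.symm
    _ ≤ s.ncard := Set.ncard_le_ncard hsub (Set.toFinite s)
    _ = Nat.card s := (Nat.card_coe_set_eq s).symm

end

def unipAux {A : Type*} [AddCommGroup A] (F : A →+ A) (hF : ∀ x, F (F x) = 0) : A ≃+ A where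
  toFun x := x + F x
  invFun x := x - F x
  left_inv x := by simp [map_add, hF x]
  right_inv x := by simp [map_sub, hF x]
  map_add' a b := by simp [map_add]; abel

lemma mem_orbit_ofAdd {A : Type*} [AddCommGroup A] (σ : A ≃+ A) (a : A) :
    Multiplicative.ofAdd (σ a) ∈ orbit (MulAut (Multiplicative A)) (Multiplicative.ofAdd a) :=
  ⟨AddEquiv.toMultiplicative σ, rfl⟩

def negAddEquiv (A : Type*) [AddCommGroup A] : A ≃+ A :=
  ⟨Equiv.neg A, fun a b => by simp; abel⟩

lemma step {ι : Type} [Fintype ι] [DecidableEq ι] (n : ι → ℕ) {i j : ι} (hij : i ≠ j)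
    {p : ℕ} (hp : p.Prime) (hpi : p ∣ n i) (hpj : p ∣ n j) :
    ∃ σ : (∀ k, ZMod (n k)) ≃+ (∀ k, ZMod (n k)),
      ∀ x : (∀ k, ZMod (n k)), x i = 1 →
        σ x = x + Pi.single j (((n j / p : ℕ) : ZMod (n j))) := by
  set t : ZMod (n j) := ((n j / p : ℕ) : ZMod (n j)) with ht
  have hφp : (zmultiplesHom (ZMod (n j)) t) (p : ℤ) = 0 := by
    simp only [zmultiplesHom_apply]
    have : (p : ℤ) • t = ((p * (n j / p) : ℕ) : ZMod (n j)) := by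
      rw [ht, zsmul_eq_mul]
      push_cast
      ring
    rw [this, Nat.mul_div_cancel' hpj, ZMod.natCast_self]
  set g : ZMod p →+ ZMod (n j) := ZMod.lift p ⟨zmultiplesHom (ZMod (n j)) t, hφp⟩ with hg
  have hg1 : g (1 : ZMod p) = t := by
    have : ((1 : ℤ) : ZMod p) = 1 := by push_cast; rfl
    rw [hg, ← this, ZMod.lift_coe]
    simp
  set f : ZMod (n i) →+ ZMod (n j) :=
    g.comp (ZMod.castHom hpi (ZMod p)).toAddMonoidHom with hf
  have hf1 : f 1 = t := by
    have : (ZMod.castHom hpi (ZMod p)) 1 = 1 := map_one _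
    have h2 : f 1 = g ((ZMod.castHom hpi (ZMod p)) 1) := rfl
    rw [h2, this, hg1]
  set F : (∀ k, ZMod (n k)) →+ (∀ k, ZMod (n k)) :=
    (AddMonoidHom.single (fun k => ZMod (n k)) j).comp
      (f.comp (Pi.evalAddMonoidHom (fun k => ZMod (n k)) i)) with hF
  have hFx : ∀ x, F x = Pi.single j (f (x i)) := fun x => rfl
  have hFF : ∀ x, F (F x) = 0 := by
    intro x
    rw [hFx, hFx, Pi.single_eq_of_ne hij]
    simp
  refine ⟨unipAux F hFF, fun x hx => ?_⟩
  show x + F x = _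
  rw [hFx, hx, hf1]

lemma cast_div_ne_zero {m p : ℕ} (hm : 1 < m) (hp : p.Prime) (hpm : p ∣ m) :
    ((m / p : ℕ) : ZMod m) ≠ 0 := by
  rw [Ne, ZMod.natCast_eq_zero_iff]
  intro hdvd
  have h1 : 0 < m / p := Nat.div_pos (Nat.le_of_dvd (by omega) hpm) hp.pos
  have h2 : m / p < m := Nat.div_lt_self (by omega) hp.one_lt
  exact absurd (Nat.le_of_dvd h1 hdvd) (by omega)

lemma aux_case {ι : Type} [Fintype ι] [DecidableEq ι] (n : ι → ℕ) (hn : ∀ i, 1 < n i)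
    {i j : ι} (hij : i ≠ j) {p : ℕ} (hp : p.Prime) (hpi : p ∣ n i) (hpj : p ∣ n j)
    (h2i : 2 < n i)
    (hb : ∀ a : Multiplicative (∀ k, ZMod (n k)),
      Nat.card (orbit (MulAut (Multiplicative (∀ k, ZMod (n k)))) a) ≤ 2) : False := by
  haveI : ∀ k, NeZero (n k) := fun k => ⟨by have := hn k; omega⟩
  set t : ZMod (n j) := ((n j / p : ℕ) : ZMod (n j)) with ht
  have ht0 : t ≠ 0 := cast_div_ne_zero (hn j) hp hpj
  obtain ⟨σ, hσ⟩ := step n hij hp hpi hpj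
  set a : (∀ k, ZMod (n k)) := Pi.single i 1 with ha
  have hσa : σ a = a + Pi.single j t := hσ a (Pi.single_eq_same i 1)
  have m1 : Multiplicative.ofAdd a ∈
      orbit (MulAut (Multiplicative (∀ k, ZMod (n k)))) (Multiplicative.ofAdd a) :=
    mem_orbit_self _
  have m2 := mem_orbit_ofAdd σ a
  rw [hσa] at m2
  have m3 := mem_orbit_ofAdd (negAddEquiv _) a
  have hneg : negAddEquiv (∀ k, ZMod (n k)) a = -a := rfl
  rw [hneg] at m3
  -- distinctness
  have d12 : a ≠ a + Pi.single j t := by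
    intro hcon
    have := congrFun hcon j
    rw [ha] at this
    simp [Pi.single_eq_of_ne (Ne.symm hij)] at this
    exact ht0 this.symm
  have h2cast : ((2 : ℕ) : ZMod (n i)) ≠ 0 := by
    rw [Ne, ZMod.natCast_eq_zero_iff]
    intro hdvd
    exact absurd (Nat.le_of_dvd (by norm_num) hdvd) (by omega)
  have d13 : a ≠ -a := by
    intro hcon
    have := congrFun hcon i
    rw [ha] at this
    simp [Pi.single_eq_same] at this
    apply h2cast
    push_cast
    linear_combination this
  have d23 : a + Pi.single j t ≠ -a := by
    intro hcon
    have := congrFun hcon j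
    rw [ha] at this
    simp [Pi.single_eq_of_ne (Ne.symm hij)] at this
    exact ht0 this
  have hinj : Function.Injective (Multiplicative.ofAdd (α := ∀ k, ZMod (n k))) :=
    fun x y hxy => hxy
  have := three_le_card m1 m2 m3 (fun hc => d12 (hinj hc)) (fun hc => d13 (hinj hc))
    (fun hc => d23 (hinj hc))
  have := hb (Multiplicative.ofAdd a)
  omega
lemma coprime_of_orbits {ι : Type} [Fintype ι] [DecidableEq ι] (n : ι → ℕ) (hn : ∀ i, 1 < n i)
    (hb : ∀ a : Multiplicative (∀ k, ZMod (n k)),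
      Nat.card (orbit (MulAut (Multiplicative (∀ k, ZMod (n k)))) a) ≤ 2) :
    Pairwise (Function.onFun Nat.Coprime n) := by
  intro i j hij
  by_contra hc
  obtain ⟨p, hp, hpd⟩ := Nat.exists_prime_and_dvd hc
  have hpi : p ∣ n i := hpd.trans (Nat.gcd_dvd_left _ _)
  have hpj : p ∣ n j := hpd.trans (Nat.gcd_dvd_right _ _)
  haveI : ∀ k, NeZero (n k) := fun k => ⟨by have := hn k; omega⟩
  rcases lt_or_ge 2 (n i) with h2i | h2i
  · exact aux_case n hn hij hp hpi hpj h2i hb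
  rcases lt_or_ge 2 (n j) with h2j | h2j
  · exact aux_case n hn hij.symm hp hpj hpi h2j hb
  -- n i = n j = 2
  have hni : n i = 2 := by have := hn i; omega
  have hnj : n j = 2 := by have := hn j; omega
  have hp2 : p = 2 := (Nat.prime_dvd_prime_iff_eq hp Nat.prime_two).mp (hni ▸ hpi)
  have hdivj : n j / p = 1 := by rw [hnj, hp2]
  have hdivi : n i / p = 1 := by rw [hni, hp2]
  obtain ⟨σ, hσ⟩ := step n hij hp hpi hpj
  obtain ⟨τ, hτ⟩ := step n hij.symm hp hpj hpi
  set a : (∀ k, ZMod (n k)) := Pi.single i 1 with ha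
  have h1j : ((n j / p : ℕ) : ZMod (n j)) = 1 := by rw [hdivj]; push_cast; rfl
  have h1i : ((n i / p : ℕ) : ZMod (n i)) = 1 := by rw [hdivi]; push_cast; rfl
  have hσa : σ a = a + Pi.single j 1 := by rw [hσ a (Pi.single_eq_same i 1), h1j]
  have hτσa : τ (σ a) = a + Pi.single j 1 + Pi.single i 1 := by
    have hj1 : (σ a) j = 1 := by
      rw [hσa, ha]
      simp [Pi.single_eq_of_ne (Ne.symm hij), Pi.single_eq_same]
    rw [hτ (σ a) hj1, h1i, hσa]
  have h110 : (1 : ZMod (n i)) + 1 = 0 := by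
    have : ((2 : ℕ) : ZMod (n i)) = 0 := by
      rw [ZMod.natCast_eq_zero_iff, hni]
    push_cast at this
    linear_combination this
  have hthird : a + Pi.single j 1 + Pi.single i 1 = Pi.single j 1 := by
    have : a + Pi.single j (1 : ZMod (n j)) + Pi.single i (1 : ZMod (n i))
        = (Pi.single i (1 : ZMod (n i)) + Pi.single i 1) + Pi.single j 1 := by
      rw [ha]; abel
    rw [this, ← Pi.single_add, h110, Pi.single_zero, zero_add]
  have m1 : Multiplicative.ofAdd a ∈
      orbit (MulAut (Multiplicative (∀ k, ZMod (n k)))) (Multiplicative.ofAdd a) :=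
    mem_orbit_self _
  have m2 := mem_orbit_ofAdd σ a
  rw [hσa] at m2
  have m3 := mem_orbit_ofAdd (σ.trans τ) a
  have htrans : (σ.trans τ) a = Pi.single j 1 := by
    rw [AddEquiv.trans_apply, hτσa, hthird]
  rw [htrans] at m3
  haveI : Fact (1 < n i) := ⟨hn i⟩
  haveI : Fact (1 < n j) := ⟨hn j⟩
  have d12 : a ≠ a + Pi.single j 1 := by
    intro hcon
    have := congrFun hcon j
    rw [ha] at this
    simp [Pi.single_eq_of_ne (Ne.symm hij), Pi.single_eq_same] at this
  have d13 : a ≠ Pi.single j 1 := by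
    intro hcon
    have := congrFun hcon i
    rw [ha] at this
    simp [Pi.single_eq_same, Pi.single_eq_of_ne hij] at this
  have d23 : a + Pi.single j 1 ≠ Pi.single j 1 := by
    intro hcon
    have := congrFun hcon i
    rw [ha] at this
    simp [Pi.single_eq_same, Pi.single_eq_of_ne hij] at this
  have hinj : Function.Injective (Multiplicative.ofAdd (α := ∀ k, ZMod (n k))) :=
    fun x y hxy => hxy
  have := three_le_card m1 m2 m3 (fun hc => d12 (hinj hc)) (fun hc => d13 (hinj hc))
    (fun hc => d23 (hinj hc))
  have := hb (Multiplicative.ofAdd a)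
  omega

lemma totient_le_two_imp (m : ℕ) (h2 : 2 < m) (hφ : Nat.totient m ≤ 2) :
    m = 3 ∨ m = 4 ∨ m = 6 := by
  have hm0 : m ≠ 0 := by omega
  have hφ2 : Nat.totient m = 2 := by
    obtain ⟨k, hk⟩ := Nat.totient_even h2
    have := Nat.totient_pos.mpr (show 0 < m by omega)
    omega
  have key : ∀ p : ℕ, p.Prime → ∀ k : ℕ, p ^ k ∣ m → Nat.totient (p ^ k) ∣ 2 :=
    fun p _ k hk => hφ2 ▸ Nat.totient_dvd_of_dvd hk
  have h12 : m ∣ 12 := by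
    rw [← Nat.factorization_le_iff_dvd hm0 (by norm_num)]
    rw [Finsupp.le_def]
    intro p
    by_cases hp : p.Prime
    · by_cases hp0 : m.factorization p = 0
      · simp [hp0]
      -- p divides m
      have hpdvd : p ∣ m := Nat.dvd_of_factorization_pos hp0
      have hordp : p ^ m.factorization p ∣ m := Nat.ordProj_dvd m p
      have htot := key p hp _ hordp
      rw [Nat.totient_prime_pow hp (Nat.pos_of_ne_zero hp0)] at htot
      have hle : p ^ (m.factorization p - 1) * (p - 1) ≤ 2 := Nat.le_of_dvd (by norm_num) htot
      have hp2 : 2 ≤ p := hp.two_le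
      have hple : p ≤ 3 := by
        by_contra hcon
        have : 3 ≤ p - 1 := by omega
        have : p ^ (m.factorization p - 1) ≥ 1 := Nat.one_le_pow _ _ (by omega)
        nlinarith
      have hf12 : (12 : ℕ).factorization 2 = 2 ∧ (12 : ℕ).factorization 3 = 1 := by
        have h12eq : (12 : ℕ) = 2 ^ 2 * 3 := by norm_num
        rw [h12eq, Nat.factorization_mul (by norm_num) (by norm_num),
          Nat.Prime.factorization_pow (by norm_num), Nat.Prime.factorization (by norm_num)]
        simp
      interval_cases p
      · -- p = 2
        rw [hf12.1]
        by_contra hcon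
        have h3 : 2 ^ (2:ℕ) ≤ 2 ^ (m.factorization 2 - 1) := Nat.pow_le_pow_right (by norm_num) (by omega)
        norm_num at h3
        omega
      · -- p = 3
        rw [hf12.2]
        by_contra hcon
        have h3 : 3 ^ (1:ℕ) ≤ 3 ^ (m.factorization 3 - 1) := Nat.pow_le_pow_right (by norm_num) (by omega)
        norm_num at h3
        omega
    · simp [Nat.factorization_eq_zero_of_not_prime _ hp]
  have hle12 : m ≤ 12 := Nat.le_of_dvd (by norm_num) h12
  interval_cases m <;> revert hφ2 <;> decide

lemma orbit_card_eq_of_mulEquiv {G K : Type*} [Group G] [Group K] (e : G ≃* K) (g : G) :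
    Nat.card (orbit (MulAut K) (e g)) = Nat.card (orbit (MulAut G) g) := by
  have himg : orbit (MulAut K) (e g) = e '' orbit (MulAut G) g := by
    ext k
    constructor
    · rintro ⟨σ, rfl⟩
      exact ⟨(e.trans (σ.trans e.symm)) g, ⟨e.trans (σ.trans e.symm), rfl⟩, by simp⟩
    · rintro ⟨x, ⟨φ, rfl⟩, rfl⟩
      exact ⟨(e.symm.trans (φ.trans e)), by simp⟩
  rw [himg, Nat.card_image_of_injective e.injective]

end helpers

theorem stmt_9 (G : Type*) [CommGroup G] [Finite G] (h : maol G = 2) :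
    ∃ m ∈ ({3, 4, 6} : Set ℕ), Nonempty (G ≃* Multiplicative (ZMod m)) := by
  classical
  obtain ⟨ι, hfin, n, hn, ⟨e0⟩⟩ := CommGroup.equiv_prod_multiplicative_zmod_of_finite G
  haveI : ∀ k, NeZero (n k) := fun k => ⟨by have := hn k; omega⟩
  have e1 : G ≃* Multiplicative (∀ k, ZMod (n k)) :=
    e0.trans (MulEquiv.piMultiplicative _).symm
  have hb0 : ∀ g : G, Nat.card (orbit (MulAut G) g) ≤ 2 := by
    intro g
    have hle : Nat.card (orbit (MulAut G) g) ≤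
        ⨆ g : G, Nat.card (orbit (MulAut G) g) :=
      le_ciSup (f := fun g : G => Nat.card (orbit (MulAut G) g))
        (Set.Finite.bddAbove (Set.finite_range _)) g
    rw [← h]
    exact hle
  have hbA : ∀ a : Multiplicative (∀ k, ZMod (n k)),
      Nat.card (orbit (MulAut (Multiplicative (∀ k, ZMod (n k)))) a) ≤ 2 := by
    intro a
    have := orbit_card_eq_of_mulEquiv e1 (e1.symm a)
    rw [MulEquiv.apply_symm_apply] at this
    rw [this]
    exact hb0 _
  have hcop := coprime_of_orbits n hn hbA
  set m := ∏ i, n i with hm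
  have crt : (∀ k, ZMod (n k)) ≃+ ZMod m := (ZMod.prodEquivPi n hcop).symm.toAddEquiv
  have e2 : G ≃* Multiplicative (ZMod m) := e1.trans (AddEquiv.toMultiplicative crt)
  haveI : NeZero m := ⟨by
    have : 0 < m := hm ▸ Finset.prod_pos fun i _ => by have := hn i; omega
    omega⟩
  have hcardm : Nat.card G = m := by
    rw [Nat.card_congr e2.toEquiv,
      Nat.card_congr (Multiplicative.ofAdd (α := ZMod m)).symm, Nat.card_zmod]
  have hm2 : 2 < m := by
    by_contra hle
    push_neg at hle
    have hsm : ∀ x y : G, x = 1 ∨ y = 1 ∨ x = y := by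
      intro x y
      by_contra hcon
      push_neg at hcon
      obtain ⟨h1, h2, h3⟩ := hcon
      have h3le := three_le_card (s := (Set.univ : Set G)) (x := (1:G)) (y := x) (z := y)
        trivial trivial trivial (Ne.symm h1) (Ne.symm h2) h3
      rw [Nat.card_coe_set_eq, Set.ncard_univ] at h3le
      omega
    have hfix : ∀ (σ : MulAut G) (g : G), σ g = g := by
      intro σ g
      rcases hsm g (σ g) with rfl | h1 | h2
      · exact map_one σ
      · have : g = 1 := by
          have := congrArg σ.symm h1
          simpa using this
        rw [this]; exact map_one σ
      · exact h2.symm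
    have horb : ∀ g : G, Nat.card (orbit (MulAut G) g) ≤ 1 := by
      intro g
      have horbg : orbit (MulAut G) g = {g} := by
        apply Set.eq_singleton_iff_unique_mem.mpr ⟨mem_orbit_self g, ?_⟩
        rintro x ⟨σ, rfl⟩
        exact hfix σ g
      rw [horbg, Nat.card_coe_set_eq, Set.ncard_singleton]
    have hle1 : maol G ≤ 1 := by
      have : (⨆ g : G, Nat.card (orbit (MulAut G) g)) ≤ 1 := ciSup_le horb
      exact this
    rw [h] at hle1
    omega
  have htot : Nat.totient m ≤ 2 := by
    have hb2 : Nat.card (orbit (MulAut (Multiplicative (ZMod m)))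
        (Multiplicative.ofAdd (1 : ZMod m))) ≤ 2 := by
      have := orbit_card_eq_of_mulEquiv e2 (e2.symm (Multiplicative.ofAdd (1 : ZMod m)))
      rw [MulEquiv.apply_symm_apply] at this
      rw [this]
      exact hb0 _
    have hmemu : ∀ u : (ZMod m)ˣ, Multiplicative.ofAdd ((u : ZMod m)) ∈
        orbit (MulAut (Multiplicative (ZMod m))) (Multiplicative.ofAdd (1 : ZMod m)) := by
      intro u
      have hσ := mem_orbit_ofAdd (DistribMulAction.toAddAut (ZMod m)ˣ (ZMod m) u) (1 : ZMod m)
      have : (DistribMulAction.toAddAut (ZMod m)ˣ (ZMod m) u : ZMod m ≃+ ZMod m) (1 : ZMod m) = (u : ZMod m) := by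
        show u • (1 : ZMod m) = (u : ZMod m)
        rw [Units.smul_def, smul_eq_mul, mul_one]
      convert hσ using 2
      exact this.symm
    have hinj : Function.Injective (fun u : (ZMod m)ˣ =>
        (⟨Multiplicative.ofAdd ((u : ZMod m)), hmemu u⟩ :
          orbit (MulAut (Multiplicative (ZMod m))) (Multiplicative.ofAdd (1 : ZMod m)))) := by
      intro u v huv
      have : (u : ZMod m) = (v : ZMod m) := congrArg (fun x => (x.1 : Multiplicative (ZMod m))) huv
      exact Units.ext this
    have hle := Nat.card_le_card_of_injective _ hinj
    rw [Nat.card_eq_fintype_card, ZMod.card_units_eq_totient] at hle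
    exact hle.trans hb2
  refine ⟨m, ?_, ⟨e2⟩⟩
  rcases totient_le_two_imp m hm2 htot with hmv | hmv | hmv <;> simp [hmv]
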